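/- Let K be a field complete with respect to a nonarchimedean absolute value ‖·‖, let q ∈ K satisfy 0 < ‖q‖ < 1, let Γ(t) = 1 + Σ_{n≥1} a_n t^n be an entire power series over K, and let Δ = δ^{−1}(Γ) be the entire power series whose coefficients are the limits of the coefficients of the partial products ∏_{i=0}^{N−1} Γ(q^i t). Then for every x₀ ∈ K: the value Δ(x₀) (given by the convergent sum Σ b_n x₀^n) equals 0 if and only if Γ(q^i x₀) = 0 for some integer i ≥ 0. In particular, every zero of δ^{−1}(Γ) is of the form q^{−i}·λ for a zero λ of Γ. -/

import Mathlib

set_option maxHeartbeats 1000000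


open Filter PowerSeries

/-- A power series `Γ ∈ K⟦t⟧` is entire if for every `r > 0`, `‖a_n‖ r^n → 0`. -/
def IsEntirePowerSeries {K : Type*} [NormedField K] (f : PowerSeries K) : Prop :=
  ∀ r : ℝ, 0 < r →
    Tendsto (fun n : ℕ => ‖PowerSeries.coeff n f‖ * r ^ n) atTop (nhds 0)

private lemma summable_of_norm_cofinite {K : Type*} [NormedField K] [CompleteSpace K]
    [IsUltrametricDist K] {α : Type*} {f : α → K}
    (h : Tendsto (fun a => ‖f a‖) cofinite (nhds 0)) : Summable f :=
  NonarchimedeanAddGroup.summable_of_tendsto_cofinite_zero (tendsto_zero_iff_norm_tendsto_zero.mpr h)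

private lemma summable_mul_ultra {K : Type*} [NormedField K] [CompleteSpace K]
    [IsUltrametricDist K] {f g : ℕ → K} (hf : Summable f) (hg : Summable g) :
    Summable (fun p : ℕ × ℕ => f p.1 * g p.2) := by
  apply summable_of_norm_cofinite
  obtain ⟨Cf, hCf⟩ := (hf.tendsto_atTop_zero.norm.bddAbove_range)
  obtain ⟨Cg, hCg⟩ := (hg.tendsto_atTop_zero.norm.bddAbove_range)
  set C : ℝ := max Cf Cg + 1 with hC
  have hCpos : 0 < C := by
    have : (0:ℝ) ≤ Cf := le_trans (norm_nonneg _) (hCf ⟨0, rfl⟩)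
    nlinarith [le_max_left Cf Cg]
  have hfC : ∀ n, ‖f n‖ < C := fun n =>
    lt_of_le_of_lt (hCf ⟨n, rfl⟩) (by nlinarith [le_max_left Cf Cg])
  have hgC : ∀ n, ‖g n‖ < C := fun n =>
    lt_of_le_of_lt (hCg ⟨n, rfl⟩) (by nlinarith [le_max_right Cf Cg])
  rw [Metric.tendsto_nhds]
  intro ε hε
  rw [eventually_cofinite]
  have hfin1 : {a : ℕ | ¬ ‖f a‖ < ε / C}.Finite := by
    have := hf.tendsto_cofinite_zero
    have h2 : ∀ᶠ a in cofinite, ‖f a‖ < ε / C := by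
      have := Metric.tendsto_nhds.mp this (ε / C) (div_pos hε hCpos)
      simpa [Real.dist_eq, abs_of_nonneg (norm_nonneg _)] using this
    simpa [eventually_cofinite] using h2
  have hfin2 : {a : ℕ | ¬ ‖g a‖ < ε / C}.Finite := by
    have := hg.tendsto_cofinite_zero
    have h2 : ∀ᶠ a in cofinite, ‖g a‖ < ε / C := by
      have := Metric.tendsto_nhds.mp this (ε / C) (div_pos hε hCpos)
      simpa [Real.dist_eq, abs_of_nonneg (norm_nonneg _)] using this
    simpa [eventually_cofinite] using h2
  apply Set.Finite.subset (hfin1.prod hfin2)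
  intro p hp
  simp only [Set.mem_setOf_eq, Real.dist_eq, sub_zero] at hp
  rw [abs_of_nonneg (norm_nonneg _)] at hp
  constructor
  · intro hlt
    exact hp (by
      calc ‖f p.1 * g p.2‖ = ‖f p.1‖ * ‖g p.2‖ := norm_mul _ _
        _ ≤ (ε / C) * ‖g p.2‖ := by nlinarith [norm_nonneg (g p.2), div_pos hε hCpos]
        _ < (ε / C) * C := by nlinarith [div_pos hε hCpos, hgC p.2]
        _ = ε := div_mul_cancel₀ _ (ne_of_gt hCpos))
  · intro hlt
    exact hp (by
      calc ‖f p.1 * g p.2‖ = ‖f p.1‖ * ‖g p.2‖ := norm_mul _ _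
        _ ≤ ‖f p.1‖ * (ε / C) := by nlinarith [norm_nonneg (f p.1), div_pos hε hCpos]
        _ < C * (ε / C) := by nlinarith [div_pos hε hCpos, hfC p.1]
        _ = ε := mul_div_cancel₀ _ (ne_of_gt hCpos))


private lemma tsum_value_mul {K : Type*} [NormedField K] [CompleteSpace K]
    [IsUltrametricDist K] (g h : PowerSeries K) (x : K)
    (hg : Summable (fun n => PowerSeries.coeff n g * x ^ n))
    (hh : Summable (fun n => PowerSeries.coeff n h * x ^ n)) :
    Summable (fun n => PowerSeries.coeff n (g * h) * x ^ n) ∧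
    (∑' n, PowerSeries.coeff n (g * h) * x ^ n)
      = (∑' n, PowerSeries.coeff n g * x ^ n) * (∑' n, PowerSeries.coeff n h * x ^ n) := by
  have hfg := summable_mul_ultra hg hh
  have key : ∀ n : ℕ, ∑ kl ∈ Finset.HasAntidiagonal.antidiagonal n,
      (PowerSeries.coeff kl.1 g * x ^ kl.1) * (PowerSeries.coeff kl.2 h * x ^ kl.2)
      = PowerSeries.coeff n (g * h) * x ^ n := by
    intro n
    rw [PowerSeries.coeff_mul, Finset.sum_mul]
    refine Finset.sum_congr rfl fun kl hkl => ?_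
    rw [Finset.HasAntidiagonal.mem_antidiagonal] at hkl
    rw [← hkl, pow_add]; ring
  constructor
  · have := summable_sum_mul_antidiagonal_of_summable_mul
        (f := fun n => PowerSeries.coeff n g * x ^ n) (g := fun n => PowerSeries.coeff n h * x ^ n) hfg
    simpa only [key] using this
  · rw [Summable.tsum_mul_tsum_eq_tsum_sum_antidiagonal (f := fun n => PowerSeries.coeff n g * x ^ n) (g := fun n => PowerSeries.coeff n h * x ^ n) hg hh hfg]
    exact (tsum_congr key).symm

private lemma sup_decay {u : ℕ → ℝ} (hu0 : ∀ n, 0 ≤ u n) (hu : Tendsto u atTop (nhds 0))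
    {s : ℝ} (hs0 : 0 ≤ s) (hs1 : s < 1) :
    Tendsto (fun n => (Finset.range (n+1)).sup' (by simp) (fun p => u p * s ^ (n - p)))
      atTop (nhds 0) := by
  rw [Metric.tendsto_atTop]
  intro ε hε
  obtain ⟨B, hB⟩ := hu.bddAbove_range
  have hB' : ∀ p, u p ≤ B := fun p => hB ⟨p, rfl⟩
  have hB0 : 0 ≤ B := le_trans (hu0 0) (hB' 0)
  obtain ⟨P, hP⟩ := (Metric.tendsto_atTop.mp hu) (ε/2) (by linarith)
  have hP' : ∀ p ≥ P, u p < ε/2 := by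
    intro p hp
    have := hP p hp
    rwa [Real.dist_eq, sub_zero, abs_of_nonneg (hu0 p)] at this
  have hgeo : Tendsto (fun k : ℕ => B * s ^ k) atTop (nhds 0) := by
    simpa using (tendsto_pow_atTop_nhds_zero_of_lt_one hs0 hs1).const_mul B
  obtain ⟨T, hT⟩ := (Metric.tendsto_atTop.mp hgeo) (ε/2) (by linarith)
  refine ⟨P + T + 1, fun n hn => ?_⟩
  rw [Real.dist_eq, sub_zero]
  have hpos : ∀ p ∈ Finset.range (n+1), u p * s ^ (n - p) < ε := by
    intro p hp
    rcases le_or_gt P p with hPp | hPp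
    · have h1 : s ^ (n - p) ≤ 1 := pow_le_one₀ hs0 hs1.le
      have := hP' p hPp
      nlinarith [hu0 p, pow_nonneg hs0 (n - p)]
    · have hTn : T ≤ n - p := by omega
      have h2 : s ^ (n - p) ≤ s ^ T := pow_le_pow_of_le_one hs0 hs1.le hTn
      have h3 : B * s ^ T < ε/2 := by
        have := hT T le_rfl
        rwa [Real.dist_eq, sub_zero, abs_of_nonneg (by positivity)] at this
      calc u p * s ^ (n - p) ≤ B * s ^ (n - p) :=
            mul_le_mul_of_nonneg_right (hB' p) (pow_nonneg hs0 _)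
        _ ≤ B * s ^ T := mul_le_mul_of_nonneg_left h2 hB0
        _ < ε := by linarith
  have hsup := Finset.sup'_lt_iff (f := fun p => u p * s ^ (n - p))
      (s := Finset.range (n+1)) (by simp) (a := ε)
  rw [abs_of_nonneg]
  · exact hsup.mpr hpos
  · exact le_trans (mul_nonneg (hu0 n) (pow_nonneg hs0 _)) (Finset.le_sup' (fun p => u p * s ^ (n - p)) (Finset.self_mem_range_succ n))

/-- The zeros of `Δ = δ⁻¹(Γ)` (whose coefficients are the limits of the coefficients of
the partial products `∏_{i<N} Γ(q^i t)`): for `x₀ ∈ K`, `Δ(x₀) = 0` iff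
`Γ(q^i x₀) = 0` for some `i ≥ 0`, values of entire series being given by `tsum`s. -/
theorem stmt6 (K : Type*) [NontriviallyNormedField K] [CompleteSpace K]
    [IsUltrametricDist K]
    (q : K) (hq0 : 0 < ‖q‖) (hq1 : ‖q‖ < 1)
    (Γ : PowerSeries K) (hΓ0 : PowerSeries.coeff 0 Γ = 1)
    (hΓent : IsEntirePowerSeries Γ)
    (Δ : PowerSeries K)
    (hΔ : ∀ n : ℕ,
      Tendsto
        (fun N : ℕ => PowerSeries.coeff n
          (∏ i ∈ Finset.range N, PowerSeries.rescale (q ^ i) Γ))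
        atTop (nhds (PowerSeries.coeff n Δ)))
    (x₀ : K) :
    (∑' n : ℕ, PowerSeries.coeff n Δ * x₀ ^ n) = 0 ↔
      ∃ i : ℕ, (∑' n : ℕ, PowerSeries.coeff n Γ * (q ^ i * x₀) ^ n) = 0 := by
  classical
  set P : ℕ → PowerSeries K := fun N => ∏ i ∈ Finset.range N, PowerSeries.rescale (q ^ i) Γ
    with hPdef
  have hq : q ≠ 0 := fun h => by simp [h] at hq0
  -- x₀ = 0 case
  rcases eq_or_ne x₀ 0 with rfl | hx0
  · have hzero : ∀ (g : PowerSeries K),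
        (∑' n : ℕ, PowerSeries.coeff n g * (0:K) ^ n) = PowerSeries.coeff 0 g := by
      intro g
      rw [tsum_eq_single 0 (fun b hb => by simp [zero_pow hb])]
      simp
    have hP0 : ∀ N, PowerSeries.coeff 0 (P N) = 1 := by
      intro N
      simp only [hPdef, PowerSeries.coeff_zero_eq_constantCoeff, map_prod]
      rw [Finset.prod_eq_one]
      intro i _
      have : (PowerSeries.constantCoeff) (PowerSeries.rescale (q ^ i) Γ)
          = PowerSeries.coeff 0 (PowerSeries.rescale (q ^ i) Γ) := by
        rw [PowerSeries.coeff_zero_eq_constantCoeff]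
      rw [this, PowerSeries.coeff_rescale, pow_zero, one_mul, hΓ0]
    have hΔ0 : PowerSeries.coeff 0 Δ = 1 := by
      have h1 : Tendsto (fun _ : ℕ => (1:K)) atTop (nhds (PowerSeries.coeff 0 Δ)) :=
        (hΔ 0).congr hP0
      exact tendsto_nhds_unique h1 tendsto_const_nhds
    constructor
    · intro h
      rw [hzero, hΔ0] at h
      exact absurd h one_ne_zero
    · rintro ⟨i, hi⟩
      rw [mul_zero, hzero, hΓ0] at hi
      exact absurd hi one_ne_zero
  -- main case
  set r : ℝ := ‖x₀‖ with hrdef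
  have hrpos : 0 < r := norm_pos_iff.mpr hx0
  set c : ℕ → ℝ := fun n => ‖PowerSeries.coeff n Γ‖ with hcdef
  set u : ℕ → ℝ := fun n => c n * r ^ n with hudef
  have hu : Tendsto u atTop (nhds 0) := hΓent r hrpos
  have hu0 : ∀ n, 0 ≤ u n := fun n => mul_nonneg (norm_nonneg _) (pow_nonneg hrpos.le _)
  set w : ℕ → ℝ := fun n => (Finset.range (n+1)).sup' (by simp) (fun p => u p * ‖q‖ ^ (n - p))
    with hwdef
  have hw : Tendsto w atTop (nhds 0) := sup_decay hu0 hu (norm_nonneg q) hq1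
  have hw0 : ∀ n, 0 ≤ w n := fun n =>
    le_trans (mul_nonneg (hu0 n) (pow_nonneg (norm_nonneg q) _))
      (Finset.le_sup' (fun p => u p * ‖q‖ ^ (n - p)) (Finset.self_mem_range_succ n))
  have hbddD : ∀ n, BddAbove (Set.range (fun N => ‖PowerSeries.coeff n (P N)‖ * r ^ n)) :=
    fun n => (((hΔ n).norm).mul_const (r ^ n)).bddAbove_range
  set D : ℕ → ℝ := fun n => ⨆ N, ‖PowerSeries.coeff n (P N)‖ * r ^ n with hDdef
  have hDle : ∀ n N, ‖PowerSeries.coeff n (P N)‖ * r ^ n ≤ D n := fun n N =>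
    le_ciSup (hbddD n) N
  have hD0 : ∀ n, 0 ≤ D n := fun n =>
    le_trans (mul_nonneg (norm_nonneg _) (pow_nonneg hrpos.le _)) (hDle n 0)
  have hDΔ : ∀ n, ‖PowerSeries.coeff n Δ‖ * r ^ n ≤ D n := fun n =>
    le_of_tendsto (((hΔ n).norm).mul_const (r ^ n)) (Filter.Eventually.of_forall (hDle n))
  -- functional recursion
  have hPsucc : ∀ N, P (N+1) = Γ * (PowerSeries.rescale q (P N)) := by
    intro N
    simp only [hPdef]
    rw [Finset.prod_range_succ', map_prod]
    simp only [PowerSeries.rescale_rescale, ← pow_succ, pow_zero, PowerSeries.rescale_one,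
      RingHom.id_apply]
    exact mul_comm _ _
  -- coefficient bound
  set Dmax : ℕ → ℝ := fun n => (Finset.range (n+1)).sup' (by simp) D with hDmaxdef
  have hDmax0 : ∀ n, 0 ≤ Dmax n :=
    fun n => le_trans (hD0 n) (Finset.le_sup' D (Finset.self_mem_range_succ n))
  have hcoeffbound : ∀ n, 1 ≤ n → ∀ N, ‖PowerSeries.coeff n (P N)‖ * r ^ n ≤ w n * Dmax n := by
    intro n hn N
    cases N with
    | zero =>
      have : P 0 = 1 := by simp [hPdef]
      rw [this, PowerSeries.coeff_one, if_neg (by omega)]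
      simp only [norm_zero, zero_mul]
      exact mul_nonneg (hw0 n) (hDmax0 n)
    | succ N =>
      rw [hPsucc N]
      rw [PowerSeries.coeff_mul]
      have hne : (Finset.HasAntidiagonal.antidiagonal n).Nonempty := ⟨(0, n), by simp⟩
      have hsum := hne.norm_sum_le_sup'_norm
        (fun kl => PowerSeries.coeff kl.1 Γ * PowerSeries.coeff kl.2
          (PowerSeries.rescale q (P N)))
      refine le_trans (mul_le_mul_of_nonneg_right hsum (pow_nonneg hrpos.le n)) ?_
      have hcomp : ((Finset.HasAntidiagonal.antidiagonal n).sup' hne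
          (fun kl => ‖PowerSeries.coeff kl.1 Γ * PowerSeries.coeff kl.2
            (PowerSeries.rescale q (P N))‖)) * r ^ n
          = (Finset.HasAntidiagonal.antidiagonal n).sup' hne
            (fun kl => ‖PowerSeries.coeff kl.1 Γ * PowerSeries.coeff kl.2
              (PowerSeries.rescale q (P N))‖ * r ^ n) := by
        exact Finset.comp_sup'_eq_sup'_comp hne (fun y : ℝ => y * r ^ n)
          (fun x y => max_mul_of_nonneg x y (pow_nonneg hrpos.le n))
      rw [hcomp]
      rw [Finset.sup'_le_iff]
      intro kl hkl
      rw [Finset.HasAntidiagonal.mem_antidiagonal] at hkl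
      rw [PowerSeries.coeff_rescale]
      have hnorm : ‖PowerSeries.coeff kl.1 Γ * (q ^ kl.2 * PowerSeries.coeff kl.2 (P N))‖
          = c kl.1 * (‖q‖ ^ kl.2 * ‖PowerSeries.coeff kl.2 (P N)‖) := by
        rw [norm_mul, norm_mul, norm_pow]
      rw [hnorm]
      have hrn : (r : ℝ) ^ n = r ^ kl.1 * r ^ kl.2 := by rw [← pow_add, hkl]
      rw [hrn]
      have hrearr : c kl.1 * (‖q‖ ^ kl.2 * ‖PowerSeries.coeff kl.2 (P N)‖)
            * (r ^ kl.1 * r ^ kl.2)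
          = (u kl.1 * ‖q‖ ^ kl.2) * (‖PowerSeries.coeff kl.2 (P N)‖ * r ^ kl.2) := by
        simp only [hudef]; ring
      rw [hrearr]
      have h1 : u kl.1 * ‖q‖ ^ kl.2 ≤ w n := by
        have hmem : kl.1 ∈ Finset.range (n+1) := by
          rw [Finset.mem_range]; omega
        have : kl.2 = n - kl.1 := by omega
        rw [this]
        exact Finset.le_sup' (fun p => u p * ‖q‖ ^ (n - p)) hmem
      have h2 : ‖PowerSeries.coeff kl.2 (P N)‖ * r ^ kl.2 ≤ Dmax n := by
        refine le_trans (hDle kl.2 N) ?_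
        exact Finset.le_sup' D (by rw [Finset.mem_range]; omega)
      exact mul_le_mul h1 h2 (mul_nonneg (norm_nonneg _) (pow_nonneg hrpos.le _))
        (hw0 n)
  have hDrec : ∀ n, 1 ≤ n → D n ≤ w n * Dmax n := by
    intro n hn
    exact ciSup_le (fun N => hcoeffbound n hn N)
  -- boundedness of D
  obtain ⟨n₀', hn₀'⟩ := (Metric.tendsto_atTop.mp hw) (1/2) (by norm_num)
  set n₀ : ℕ := n₀' + 1 with hn₀def
  have hwhalf : ∀ n ≥ n₀, w n ≤ 1/2 := by
    intro n hn
    have := hn₀' n (by omega)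
    rw [Real.dist_eq, sub_zero, abs_of_nonneg (hw0 n)] at this
    linarith
  set M : ℝ := 1 + ∑ j ∈ Finset.range n₀, D j with hMdef
  have hM1 : (1:ℝ) ≤ M := by
    have : 0 ≤ ∑ j ∈ Finset.range n₀, D j := Finset.sum_nonneg fun j _ => hD0 j
    simp only [hMdef]; linarith
  have hMsmall : ∀ j, j < n₀ → D j ≤ M := by
    intro j hj
    have h1 : D j ≤ ∑ j ∈ Finset.range n₀, D j :=
      Finset.single_le_sum (fun i _ => hD0 i) (Finset.mem_range.mpr hj)
    simp only [hMdef]; linarith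
  have hDM : ∀ n, D n ≤ M := by
    intro n
    induction n using Nat.strong_induction_on with
    | _ n ih =>
      rcases lt_or_ge n n₀ with hlt | hge
      · exact hMsmall n hlt
      · have hn1 : 1 ≤ n := by omega
        have hDmaxle : Dmax n ≤ max (D n) M := by
          rw [hDmaxdef]
          rw [Finset.sup'_le_iff]
          intro j hj
          rw [Finset.mem_range] at hj
          rcases eq_or_lt_of_le (Nat.lt_succ_iff.mp hj) with rfl | hjn
          · exact le_max_left _ _
          · exact le_trans (ih j hjn) (le_max_right _ _)
        have hkey : D n ≤ (1/2) * max (D n) M := by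
          refine le_trans (hDrec n hn1) ?_
          have := hwhalf n hge
          have hmax0 : 0 ≤ max (D n) M := le_trans (hD0 n) (le_max_left _ _)
          calc w n * Dmax n ≤ w n * max (D n) M :=
                mul_le_mul_of_nonneg_left hDmaxle (hw0 n)
            _ ≤ (1/2) * max (D n) M := mul_le_mul_of_nonneg_right this hmax0
        rcases le_or_gt (D n) M with h | h
        · exact h
        · exfalso
          rw [max_eq_left h.le] at hkey
          linarith [hD0 n, h, hM1]
  have hDmaxM : ∀ n, Dmax n ≤ M := by
    intro n
    rw [hDmaxdef, Finset.sup'_le_iff]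
    exact fun j _ => hDM j
  have hDtend : Tendsto D atTop (nhds 0) := by
    have hle : ∀ᶠ n in atTop, D n ≤ w n * M := by
      filter_upwards [eventually_ge_atTop 1] with n hn
      exact le_trans (hDrec n hn) (mul_le_mul_of_nonneg_left (hDmaxM n) (hw0 n))
    have hge0 : ∀ᶠ n in atTop, (0:ℝ) ≤ D n := Filter.Eventually.of_forall hD0
    have hwM : Tendsto (fun n => w n * M) atTop (nhds 0) := by
      simpa using hw.mul_const M
    exact tendsto_of_tendsto_of_tendsto_of_le_of_le' tendsto_const_nhds hwM hge0 hle
  -- summability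
  have hnormterm : ∀ (g : PowerSeries K) (n : ℕ),
      ‖PowerSeries.coeff n g * x₀ ^ n‖ = ‖PowerSeries.coeff n g‖ * r ^ n := by
    intro g n
    rw [norm_mul, norm_pow]
  have hsummable_of_tend : ∀ (g : PowerSeries K),
      Tendsto (fun n => ‖PowerSeries.coeff n g‖ * r ^ n) atTop (nhds 0) →
      Summable (fun n => PowerSeries.coeff n g * x₀ ^ n) := by
    intro g hg
    apply summable_of_norm_cofinite
    rw [Nat.cofinite_eq_atTop]
    simpa only [hnormterm g] using hg
  have hΔdecay : Tendsto (fun n => ‖PowerSeries.coeff n Δ‖ * r ^ n) atTop (nhds 0) := by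
    refine tendsto_of_tendsto_of_tendsto_of_le_of_le' tendsto_const_nhds hDtend ?_ ?_
    · exact Filter.Eventually.of_forall fun n =>
        mul_nonneg (norm_nonneg _) (pow_nonneg hrpos.le _)
    · exact Filter.Eventually.of_forall hDΔ
  have hsummΔ : Summable (fun n => PowerSeries.coeff n Δ * x₀ ^ n) :=
    hsummable_of_tend Δ hΔdecay
  have hsummP : ∀ N, Summable (fun n => PowerSeries.coeff n (P N) * x₀ ^ n) := by
    intro N
    apply hsummable_of_tend
    refine tendsto_of_tendsto_of_tendsto_of_le_of_le' tendsto_const_nhds hDtend ?_ ?_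
    · exact Filter.Eventually.of_forall fun n =>
        mul_nonneg (norm_nonneg _) (pow_nonneg hrpos.le _)
    · exact Filter.Eventually.of_forall fun n => hDle n N
  -- values
  set V : ℕ → K := fun N => ∑' n, PowerSeries.coeff n (P N) * x₀ ^ n with hVdef
  set VΔ : K := ∑' n, PowerSeries.coeff n Δ * x₀ ^ n with hVΔdef
  have hVtend : Tendsto V atTop (nhds VΔ) := by
    rw [Metric.tendsto_atTop]
    intro ε hε
    obtain ⟨T', hT'⟩ := (Metric.tendsto_atTop.mp hDtend) (ε/2) (by linarith)
    set T : ℕ := T' with hTdef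
    have hDsmall : ∀ n ≥ T, D n < ε/2 := by
      intro n hn
      have := hT' n hn
      rwa [Real.dist_eq, sub_zero, abs_of_nonneg (hD0 n)] at this
    -- choose N₀ handling small n
    have hcoefftend : ∀ n, Tendsto
        (fun N => ‖PowerSeries.coeff n (P N) - PowerSeries.coeff n Δ‖ * r ^ n)
        atTop (nhds 0) := by
      intro n
      have h1 : Tendsto (fun N => PowerSeries.coeff n (P N) - PowerSeries.coeff n Δ)
          atTop (nhds 0) := by
        simpa using (hΔ n).sub_const (PowerSeries.coeff n Δ)
      simpa using (h1.norm.mul_const (r ^ n))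
    have hev : ∀ᶠ N in atTop, ∀ n ∈ Finset.range T,
        ‖PowerSeries.coeff n (P N) - PowerSeries.coeff n Δ‖ * r ^ n < ε/2 := by
      rw [Filter.eventually_all_finset]
      intro n _
      have := (Metric.tendsto_atTop.mp (hcoefftend n)) (ε/2) (by linarith)
      obtain ⟨N₁, hN₁⟩ := this
      rw [Filter.eventually_atTop]
      refine ⟨N₁, fun N hN => ?_⟩
      have := hN₁ N hN
      rwa [Real.dist_eq, sub_zero,
        abs_of_nonneg (mul_nonneg (norm_nonneg _) (pow_nonneg hrpos.le _))] at this
    rw [Filter.eventually_atTop] at hev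
    obtain ⟨N₀, hN₀⟩ := hev
    refine ⟨N₀, fun N hN => ?_⟩
    have hdiff : V N - VΔ = ∑' n, (PowerSeries.coeff n (P N) - PowerSeries.coeff n Δ) * x₀ ^ n := by
      rw [hVdef, hVΔdef]
      simp only [sub_mul]
      exact (Summable.tsum_sub (hsummP N) hsummΔ).symm
    rw [dist_eq_norm, hdiff]
    have hbound : ∀ n : ℕ,
        ‖(PowerSeries.coeff n (P N) - PowerSeries.coeff n Δ) * x₀ ^ n‖ ≤ ε/2 := by
      intro n
      rw [norm_mul, norm_pow]
      rcases lt_or_ge n T with hnT | hnT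
      · exact (hN₀ N hN n (Finset.mem_range.mpr hnT)).le
      · have h1 : ‖PowerSeries.coeff n (P N) - PowerSeries.coeff n Δ‖
            ≤ max ‖PowerSeries.coeff n (P N)‖ ‖PowerSeries.coeff n Δ‖ := by
          rw [sub_eq_add_neg]
          refine le_trans (IsUltrametricDist.norm_add_le_max _ _) ?_
          rw [norm_neg]
        have h2 : ‖PowerSeries.coeff n (P N) - PowerSeries.coeff n Δ‖ * r ^ n ≤ D n := by
          rcases max_cases ‖PowerSeries.coeff n (P N)‖ ‖PowerSeries.coeff n Δ‖ with
            ⟨hmax, _⟩ | ⟨hmax, _⟩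
          · refine le_trans ?_ (hDle n N)
            exact mul_le_mul_of_nonneg_right (by rw [hmax] at h1; exact h1)
              (pow_nonneg hrpos.le _)
          · refine le_trans ?_ (hDΔ n)
            exact mul_le_mul_of_nonneg_right (by rw [hmax] at h1; exact h1)
              (pow_nonneg hrpos.le _)
        exact le_trans h2 (hDsmall n hnT).le
    have := IsUltrametricDist.norm_tsum_le_of_forall_le_of_nonneg (by linarith : (0:ℝ) ≤ ε/2)
      hbound
    linarith
  -- V N as finite product of values
  set f : ℕ → K := fun i => ∑' n, PowerSeries.coeff n Γ * (q ^ i * x₀) ^ n with hfdef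
  have hrescale_eq : ∀ (i n : ℕ),
      PowerSeries.coeff n (PowerSeries.rescale (q ^ i) Γ) * x₀ ^ n
        = PowerSeries.coeff n Γ * (q ^ i * x₀) ^ n := by
    intro i n
    rw [PowerSeries.coeff_rescale, mul_pow, ← pow_mul]
    ring
  have hsummres : ∀ i : ℕ,
      Summable (fun n => PowerSeries.coeff n (PowerSeries.rescale (q ^ i) Γ) * x₀ ^ n) := by
    intro i
    apply summable_of_norm_cofinite
    rw [Nat.cofinite_eq_atTop]
    have heq : (fun n => ‖PowerSeries.coeff n (PowerSeries.rescale (q ^ i) Γ) * x₀ ^ n‖)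
        = fun n => ‖PowerSeries.coeff n Γ‖ * ‖q ^ i * x₀‖ ^ n := by
      funext n
      rw [hrescale_eq, norm_mul, norm_pow]
    rw [heq]
    have hpos : 0 < ‖q ^ i * x₀‖ := by
      rw [norm_mul, norm_pow]
      positivity
    exact hΓent _ hpos
  have hsummf : ∀ i : ℕ, Summable (fun n => PowerSeries.coeff n Γ * (q ^ i * x₀) ^ n) := by
    intro i
    have := hsummres i
    simpa only [hrescale_eq i] using this
  have hfres : ∀ i : ℕ,
      (∑' n, PowerSeries.coeff n (PowerSeries.rescale (q ^ i) Γ) * x₀ ^ n) = f i := by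
    intro i
    rw [hfdef]
    exact tsum_congr (hrescale_eq i)
  have hVprod : ∀ N, V N = ∏ i ∈ Finset.range N, f i := by
    intro N
    induction N with
    | zero =>
      rw [hVdef]
      simp only [Finset.range_zero, Finset.prod_empty]
      have : P 0 = 1 := by simp [hPdef]
      rw [this]
      rw [tsum_eq_single 0 (fun b hb => by
        rw [PowerSeries.coeff_one, if_neg hb, zero_mul])]
      rw [PowerSeries.coeff_one, if_pos rfl, pow_zero, mul_one]
    | succ N ih =>
      have hPs : P (N + 1) = P N * PowerSeries.rescale (q ^ N) Γ := by
        simp only [hPdef]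
        exact Finset.prod_range_succ _ N
      have := (tsum_value_mul (P N) (PowerSeries.rescale (q ^ N) Γ) x₀ (hsummP N)
        (hsummres N)).2
      rw [hVdef]
      simp only [hPs]
      rw [this, hfres N, Finset.prod_range_succ, ← ih]
  have hlim : Tendsto (fun N => ∏ i ∈ Finset.range N, f i) atTop (nhds VΔ) :=
    hVtend.congr hVprod
  constructor
  · -- forward direction
    intro hzero
    by_contra hno
    push_neg at hno
    have hfne : ∀ i, f i ≠ 0 := hno
    -- bound ‖f i - 1‖
    obtain ⟨B, hB⟩ := hu.bddAbove_range
    have hB' : ∀ p, u p ≤ B := fun p => hB ⟨p, rfl⟩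
    have hB0 : 0 ≤ B := le_trans (hu0 0) (hB' 0)
    have hf1 : ∀ i, ‖f i - 1‖ ≤ B * ‖q‖ ^ i := by
      intro i
      have hz := Summable.tsum_eq_zero_add (hsummf i)
      rw [hfdef]
      simp only
      rw [hz, pow_zero, mul_one, hΓ0, add_sub_cancel_left]
      refine IsUltrametricDist.norm_tsum_le_of_forall_le_of_nonneg
        (by positivity) (fun n => ?_)
      rw [norm_mul, norm_pow, norm_mul, norm_pow]
      have h1 : ‖PowerSeries.coeff (n+1) Γ‖ * (‖q‖ ^ i * ‖x₀‖) ^ (n+1)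
          = u (n+1) * (‖q‖ ^ i) ^ (n+1) := by
        rw [hudef, hcdef]
        simp only
        rw [mul_pow]
        ring
      rw [h1]
      have h2 : (‖q‖ ^ i) ^ (n+1) ≤ ‖q‖ ^ i := by
        have hle1 : ‖q‖ ^ i ≤ 1 := pow_le_one₀ (norm_nonneg q) hq1.le
        calc (‖q‖ ^ i) ^ (n+1) ≤ (‖q‖ ^ i) ^ 1 :=
              pow_le_pow_of_le_one (by positivity) hle1 (by omega)
          _ = ‖q‖ ^ i := pow_one _
      calc u (n+1) * (‖q‖ ^ i) ^ (n+1) ≤ B * (‖q‖ ^ i) ^ (n+1) :=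
            mul_le_mul_of_nonneg_right (hB' _) (by positivity)
        _ ≤ B * ‖q‖ ^ i := mul_le_mul_of_nonneg_left h2 hB0
    have htend1 : Tendsto (fun i : ℕ => B * ‖q‖ ^ i) atTop (nhds 0) := by
      simpa using (tendsto_pow_atTop_nhds_zero_of_lt_one (norm_nonneg q) hq1).const_mul B
    obtain ⟨i₁, hi₁⟩ := (Metric.tendsto_atTop.mp htend1) 1 one_pos
    have hnorm1 : ∀ i ≥ i₁, ‖f i‖ = 1 := by
      intro i hi
      have hlt : ‖f i - 1‖ < 1 := by
        have := hi₁ i hi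
        rw [Real.dist_eq, sub_zero, abs_of_nonneg (by positivity)] at this
        linarith [hf1 i]
      have hle : ‖f i‖ ≤ 1 := by
        have : f i = (f i - 1) + 1 := by ring
        rw [this]
        refine le_trans (IsUltrametricDist.norm_add_le_max _ _) ?_
        rw [norm_one]
        exact max_le hlt.le le_rfl
      have hge : 1 ≤ ‖f i‖ := by
        by_contra hcon
        push_neg at hcon
        have h1fi : ‖(1:K) - f i‖ < 1 := by
          rw [← norm_neg]
          simpa [neg_sub] using hlt
        have hn : ‖f i + ((1:K) - f i)‖ ≤ max ‖f i‖ ‖(1:K) - f i‖ :=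
          IsUltrametricDist.norm_add_le_max _ _
        have heq : f i + ((1:K) - f i) = 1 := by ring
        rw [heq, norm_one] at hn
        rcases max_cases ‖f i‖ ‖(1:K) - f i‖ with ⟨hm, _⟩ | ⟨hm, _⟩ <;> rw [hm] at hn
        · linarith
        · linarith
      linarith [le_antisymm hle hge]
    set cst : ℝ := ∏ i ∈ Finset.range i₁, ‖f i‖ with hcstdef
    have hcstpos : 0 < cst :=
      Finset.prod_pos fun i _ => norm_pos_iff.mpr (hfne i)
    have hconstN : ∀ N ≥ i₁, ‖∏ i ∈ Finset.range N, f i‖ = cst := by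
      intro N hN
      rw [norm_prod, hcstdef]
      symm
      refine Finset.prod_subset (Finset.range_subset_range.mpr hN) (fun i hiN hii₁ => ?_)
      rw [Finset.mem_range] at hiN hii₁
      exact hnorm1 i (by omega)
    have h1 : Tendsto (fun N => ‖∏ i ∈ Finset.range N, f i‖) atTop (nhds ‖VΔ‖) := hlim.norm
    have h2 : Tendsto (fun N => ‖∏ i ∈ Finset.range N, f i‖) atTop (nhds cst) := by
      refine Tendsto.congr' ?_ (tendsto_const_nhds : Tendsto (fun _ : ℕ => cst) atTop (nhds cst))
      filter_upwards [eventually_ge_atTop i₁] with N hN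
      exact (hconstN N hN).symm
    have huniq := tendsto_nhds_unique h1 h2
    have hzv : VΔ = 0 := hzero
    rw [hzv, norm_zero] at huniq
    exact absurd huniq.symm (ne_of_gt hcstpos)
  · -- backward direction
    rintro ⟨i, hi⟩
    have hfi : f i = 0 := hi
    have hevzero : ∀ᶠ N in atTop, (∏ j ∈ Finset.range N, f j) = 0 := by
      filter_upwards [eventually_ge_atTop (i+1)] with N hN
      exact Finset.prod_eq_zero (Finset.mem_range.mpr (by omega)) hfi
    have h0 : Tendsto (fun N => ∏ j ∈ Finset.range N, f j) atTop (nhds 0) :=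
      Tendsto.congr' (by filter_upwards [hevzero] with N hN; exact hN.symm)
        tendsto_const_nhds
    exact (tendsto_nhds_unique hlim h0)
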